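/- Let p = 8k - 1 be prime. Then the chromatic number of the graph G(p+2, 3, 2) equals exactly p. -/
import Mathlib

open Finset

attribute [-instance] Fintype.IsSquare.decidablePred
open scoped Classical

variable {p : ℕ}

/-- For `p ≡ 7 (mod 8)`, `-1` is not a square mod `p`. -/
lemma KN.not_sq_neg_one [Fact p.Prime] (h7 : p % 8 = 7) : ¬ IsSquare (-1 : ZMod p) := by
  rw [ZMod.exists_sq_eq_neg_one_iff]
  omega

lemma KN.two_ne_zero' [Fact p.Prime] (h7 : p % 8 = 7) : (2 : ZMod p) ≠ 0 := by
  have : ((2 : ℕ) : ZMod p) ≠ 0 := by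
    rw [Ne, ZMod.natCast_eq_zero_iff]
    intro h
    have := (Nat.prime_dvd_prime_iff_eq (Fact.out : p.Prime) Nat.prime_two).mp h
    omega
  simpa using this

lemma KN.three_ne_zero' [Fact p.Prime] (h7 : p % 8 = 7) : (3 : ZMod p) ≠ 0 := by
  have : ((3 : ℕ) : ZMod p) ≠ 0 := by
    rw [Ne, ZMod.natCast_eq_zero_iff]
    intro h
    have := (Nat.prime_dvd_prime_iff_eq (Fact.out : p.Prime) Nat.prime_three).mp h
    omega
  simpa using this

lemma KN.sq_two [Fact p.Prime] (h7 : p % 8 = 7) : IsSquare (2 : ZMod p) := by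
  rw [ZMod.exists_sq_eq_two_iff (by omega)]
  right; exact h7

/-- For `d ≠ 0`, `-d` is a square iff `d` is not. -/
lemma KN.sq_neg_iff [Fact p.Prime] (h7 : p % 8 = 7) {d : ZMod p} (hd : d ≠ 0) :
    IsSquare (-d) ↔ ¬ IsSquare d := by
  classical
  have hone : (-1 : ZMod p) ≠ 0 := by
    simpa using (neg_ne_zero.mpr (one_ne_zero : (1 : ZMod p) ≠ 0))
  have hχ1 : quadraticChar (ZMod p) (-1) = -1 :=
    quadraticChar_neg_one_iff_not_isSquare.mpr (KN.not_sq_neg_one h7)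
  have hmul : quadraticChar (ZMod p) (-d) = quadraticChar (ZMod p) (-1) * quadraticChar (ZMod p) d := by
    rw [← map_mul]; ring_nf
  constructor
  · intro hs hsd
    have h1 : quadraticChar (ZMod p) (-d) = 1 :=
      (quadraticChar_one_iff_isSquare (neg_ne_zero.mpr hd)).mpr hs
    have h2 : quadraticChar (ZMod p) d = 1 :=
      (quadraticChar_one_iff_isSquare hd).mpr hsd
    rw [hmul, hχ1, h2] at h1
    norm_num at h1
  · intro hns
    have h2 : quadraticChar (ZMod p) d = -1 := quadraticChar_neg_one_iff_not_isSquare.mpr hns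
    have h1 : quadraticChar (ZMod p) (-d) = 1 := by rw [hmul, hχ1, h2]; ring
    exact (quadraticChar_one_iff_isSquare (neg_ne_zero.mpr hd)).mp h1

/-- Multiplying by the square `2` preserves squareness. -/
lemma KN.sq_two_mul_iff [Fact p.Prime] (h7 : p % 8 = 7) {d : ZMod p} (hd : d ≠ 0) :
    IsSquare (2 * d) ↔ IsSquare d := by
  classical
  have h2 : quadraticChar (ZMod p) 2 = 1 :=
    (quadraticChar_one_iff_isSquare (KN.two_ne_zero' h7)).mpr (KN.sq_two h7)
  have hmul : quadraticChar (ZMod p) (2 * d) = quadraticChar (ZMod p) d := by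
    rw [map_mul, h2, one_mul]
  have h2d : (2 : ZMod p) * d ≠ 0 := mul_ne_zero (KN.two_ne_zero' h7) hd
  rw [← quadraticChar_one_iff_isSquare h2d, hmul, quadraticChar_one_iff_isSquare hd]

/-- The key injectivity: `d ↦ (d or 2d according to squareness of -d)` is injective on nonzero. -/
lemma KN.key_inj [Fact p.Prime] (h7 : p % 8 = 7) {d1 d2 : ZMod p} (h1 : d1 ≠ 0) (h2 : d2 ≠ 0)
    (he : (if IsSquare (-d1) then d1 else 2 * d1) = (if IsSquare (-d2) then d2 else 2 * d2)) :
    d1 = d2 := by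
  by_cases c1 : IsSquare (-d1) <;> by_cases c2 : IsSquare (-d2) <;>
      simp only [c1, c2, if_pos, if_neg, if_true, if_false] at he
  · exact he
  · -- d1 = 2 * d2, IsSquare (-d1), ¬ IsSquare (-d2)
    exfalso
    have : -d1 = 2 * (-d2) := by rw [he]; ring
    rw [this, KN.sq_two_mul_iff h7 (neg_ne_zero.mpr h2)] at c1
    exact c2 c1
  · exfalso
    have : -d2 = 2 * (-d1) := by rw [← he]; ring
    rw [this, KN.sq_two_mul_iff h7 (neg_ne_zero.mpr h1)] at c2
    exact c1 c2
  · exact mul_left_cancel₀ (KN.two_ne_zero' h7) he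

lemma KN.key_inj2 [Fact p.Prime] (h7 : p % 8 = 7) {d1 d2 : ZMod p} (h1 : d1 ≠ 0) (h2 : d2 ≠ 0)
    (he : (if IsSquare (-d1) then 2 * d1 else d1) = (if IsSquare (-d2) then 2 * d2 else d2)) :
    d1 = d2 := by
  by_cases c1 : IsSquare (-d1) <;> by_cases c2 : IsSquare (-d2) <;>
      simp only [c1, c2, if_pos, if_neg, if_true, if_false] at he
  · exact mul_left_cancel₀ (KN.two_ne_zero' h7) he
  · exfalso
    have h : -d2 = 2 * (-d1) := by rw [← he]; ring
    rw [h, KN.sq_two_mul_iff h7 (neg_ne_zero.mpr h1)] at c2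
    exact c2 c1
  · exfalso
    have h : -d1 = 2 * (-d2) := by rw [he]; ring
    rw [h, KN.sq_two_mul_iff h7 (neg_ne_zero.mpr h2)] at c1
    exact c1 c2
  · exact he

noncomputable def KN.sig (a b : ZMod p) : ZMod p := if IsSquare (a - b) then a else b

noncomputable def KN.tau (a b : ZMod p) : ZMod p := if IsSquare (a - b) then b else a

lemma KN.sig_comm [Fact p.Prime] (h7 : p % 8 = 7) {a b : ZMod p} (hab : a ≠ b) :
    KN.sig a b = KN.sig b a := by
  have hd : a - b ≠ 0 := sub_ne_zero.mpr hab
  have hiff : IsSquare (b - a) ↔ ¬ IsSquare (a - b) := by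
    rw [show b - a = -(a - b) by ring]; exact KN.sq_neg_iff h7 hd
  unfold KN.sig
  by_cases hc : IsSquare (a - b)
  · rw [if_pos hc, if_neg (by rw [hiff]; exact not_not_intro hc)]
  · rw [if_neg hc, if_pos (hiff.mpr hc)]

lemma KN.tau_comm [Fact p.Prime] (h7 : p % 8 = 7) {a b : ZMod p} (hab : a ≠ b) :
    KN.tau a b = KN.tau b a := by
  have hd : a - b ≠ 0 := sub_ne_zero.mpr hab
  have hiff : IsSquare (b - a) ↔ ¬ IsSquare (a - b) := by
    rw [show b - a = -(a - b) by ring]; exact KN.sq_neg_iff h7 hd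
  unfold KN.tau
  by_cases hc : IsSquare (a - b)
  · rw [if_pos hc, if_neg (by rw [hiff]; exact not_not_intro hc)]
  · rw [if_neg hc, if_pos (hiff.mpr hc)]

lemma KN.sig_mem (a b : ZMod p) : KN.sig a b = a ∨ KN.sig a b = b := by
  unfold KN.sig; split <;> simp

lemma KN.tau_mem (a b : ZMod p) : KN.tau a b = a ∨ KN.tau a b = b := by
  unfold KN.tau; split <;> simp

lemma KN.sig_ne_tau {a b : ZMod p} (hab : a ≠ b) : KN.sig a b ≠ KN.tau a b := by
  unfold KN.sig KN.tau; split
  · exact hab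
  · exact hab.symm

/-- normal form: `z + sig a z = 2a + (d or 2d)` where `d = z - a`. -/
lemma KN.add_sig (a z : ZMod p) :
    z + KN.sig a z = 2 * a + (if IsSquare (-(z - a)) then (z - a) else 2 * (z - a)) := by
  unfold KN.sig
  rw [show a - z = -(z - a) by ring]
  split <;> ring

lemma KN.add_tau (a z : ZMod p) :
    z + KN.tau a z = 2 * a + (if IsSquare (-(z - a)) then 2 * (z - a) else (z - a)) := by
  unfold KN.tau
  rw [show a - z = -(z - a) by ring]
  split <;> ring

lemma KN.sig_inj [Fact p.Prime] (h7 : p % 8 = 7) {a z w : ZMod p}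
    (hz : z ≠ a) (hw : w ≠ a) (hzw : z ≠ w) :
    z + KN.sig a z ≠ w + KN.sig a w := by
  rw [KN.add_sig, KN.add_sig]
  intro h
  have h' := add_left_cancel h
  exact hzw (by have := KN.key_inj h7 (sub_ne_zero.mpr hz) (sub_ne_zero.mpr hw) h'; linear_combination this)

lemma KN.tau_inj [Fact p.Prime] (h7 : p % 8 = 7) {a z w : ZMod p}
    (hz : z ≠ a) (hw : w ≠ a) (hzw : z ≠ w) :
    z + KN.tau a z ≠ w + KN.tau a w := by
  rw [KN.add_tau, KN.add_tau]
  intro h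
  have h' := add_left_cancel h
  exact hzw (by have := KN.key_inj2 h7 (sub_ne_zero.mpr hz) (sub_ne_zero.mpr hw) h'; linear_combination this)

lemma KN.add_sig_ne [Fact p.Prime] (h7 : p % 8 = 7) {a z : ZMod p} (hz : z ≠ a) :
    z + KN.sig a z ≠ 2 * a := by
  rw [KN.add_sig]
  have hd : z - a ≠ 0 := sub_ne_zero.mpr hz
  intro h
  have h' : (if IsSquare (-(z - a)) then (z - a) else 2 * (z - a)) = 0 := by
    exact add_eq_left.mp h
  revert h'
  split
  · exact hd
  · exact mul_ne_zero (KN.two_ne_zero' h7) hd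

lemma KN.add_tau_ne [Fact p.Prime] (h7 : p % 8 = 7) {a z : ZMod p} (hz : z ≠ a) :
    z + KN.tau a z ≠ 2 * a := by
  rw [KN.add_tau]
  have hd : z - a ≠ 0 := sub_ne_zero.mpr hz
  intro h
  have h' : (if IsSquare (-(z - a)) then 2 * (z - a) else (z - a)) = 0 := by
    exact add_eq_left.mp h
  revert h'
  split
  · exact mul_ne_zero (KN.two_ne_zero' h7) hd
  · exact hd

def KN.e1 (p : ℕ) : Fin (p + 2) := ⟨p, by omega⟩
def KN.e2 (p : ℕ) : Fin (p + 2) := ⟨p + 1, by omega⟩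
def KN.iot (p : ℕ) (i : Fin (p + 2)) : ZMod p := (i.val : ZMod p)

lemma KN.e1_ne_e2 : KN.e1 p ≠ KN.e2 p := by
  simp [KN.e1, KN.e2, Fin.ext_iff]

lemma KN.fin_ne_e1 {x : Fin (p + 2)} (hx : x.val < p) : x ≠ KN.e1 p := by
  simp [KN.e1, Fin.ext_iff]; omega

lemma KN.fin_ne_e2 {x : Fin (p + 2)} (hx : x.val < p) : x ≠ KN.e2 p := by
  simp [KN.e2, Fin.ext_iff]; omega

lemma KN.iot_inj {x y : Fin (p + 2)} (hx : x.val < p) (hy : y.val < p) (hxy : x ≠ y) :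
    KN.iot p x ≠ KN.iot p y := by
  intro h
  have hv := congrArg ZMod.val h
  simp only [KN.iot] at hv
  rw [ZMod.val_cast_of_lt hx, ZMod.val_cast_of_lt hy] at hv
  exact hxy (Fin.ext hv)

noncomputable def KN.qsum (p : ℕ) (t : Finset (Fin (p + 2))) : ZMod p :=
  ∑ x ∈ t, ∑ y ∈ t.erase x, (if IsSquare (KN.iot p x - KN.iot p y) then KN.iot p x else 0)

noncomputable def KN.qsum' (p : ℕ) (t : Finset (Fin (p + 2))) : ZMod p :=
  ∑ x ∈ t, ∑ y ∈ t.erase x, (if IsSquare (KN.iot p y - KN.iot p x) then KN.iot p x else 0)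

def KN.fpart (p : ℕ) (s : Finset (Fin (p + 2))) : Finset (Fin (p + 2)) :=
  (s.erase (KN.e1 p)).erase (KN.e2 p)

noncomputable def KN.colF (p : ℕ) (s : Finset (Fin (p + 2))) : ZMod p :=
  if KN.e1 p ∈ s then
    (if KN.e2 p ∈ s then 3 * ∑ x ∈ KN.fpart p s, KN.iot p x
     else (∑ x ∈ KN.fpart p s, KN.iot p x) + KN.qsum p (KN.fpart p s))
  else
    (if KN.e2 p ∈ s then (∑ x ∈ KN.fpart p s, KN.iot p x) + KN.qsum' p (KN.fpart p s)
     else ∑ x ∈ KN.fpart p s, KN.iot p x)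

lemma KN.qsum_pair [Fact p.Prime] (h7 : p % 8 = 7) {x y : Fin (p + 2)}
    (hx : x.val < p) (hy : y.val < p) (hxy : x ≠ y) :
    KN.qsum p {x, y} = KN.sig (KN.iot p x) (KN.iot p y) := by
  have hxy' : KN.iot p x ≠ KN.iot p y := KN.iot_inj hx hy hxy
  have e1 : ({x, y} : Finset (Fin (p + 2))).erase x = {y} := by
    rw [Finset.erase_insert (by simpa using hxy)]
  have e2 : ({x, y} : Finset (Fin (p + 2))).erase y = {x} := by
    rw [Finset.pair_comm, Finset.erase_insert (by simpa using hxy.symm)]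
  unfold KN.qsum
  rw [Finset.sum_pair hxy, e1, e2, Finset.sum_singleton, Finset.sum_singleton]
  have hiff : IsSquare (KN.iot p y - KN.iot p x) ↔ ¬ IsSquare (KN.iot p x - KN.iot p y) := by
    rw [show KN.iot p y - KN.iot p x = -(KN.iot p x - KN.iot p y) by ring]
    exact KN.sq_neg_iff h7 (sub_ne_zero.mpr hxy')
  unfold KN.sig
  by_cases hc : IsSquare (KN.iot p x - KN.iot p y)
  · rw [if_pos hc, if_neg (by rw [hiff]; exact not_not_intro hc), if_pos hc, add_zero]
  · rw [if_neg hc, if_pos (hiff.mpr hc), if_neg hc, zero_add]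

lemma KN.qsum'_pair [Fact p.Prime] (h7 : p % 8 = 7) {x y : Fin (p + 2)}
    (hx : x.val < p) (hy : y.val < p) (hxy : x ≠ y) :
    KN.qsum' p {x, y} = KN.tau (KN.iot p x) (KN.iot p y) := by
  have hxy' : KN.iot p x ≠ KN.iot p y := KN.iot_inj hx hy hxy
  have e1 : ({x, y} : Finset (Fin (p + 2))).erase x = {y} := by
    rw [Finset.erase_insert (by simpa using hxy)]
  have e2 : ({x, y} : Finset (Fin (p + 2))).erase y = {x} := by
    rw [Finset.pair_comm, Finset.erase_insert (by simpa using hxy.symm)]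
  unfold KN.qsum'
  rw [Finset.sum_pair hxy, e1, e2, Finset.sum_singleton, Finset.sum_singleton]
  have hiff : IsSquare (KN.iot p y - KN.iot p x) ↔ ¬ IsSquare (KN.iot p x - KN.iot p y) := by
    rw [show KN.iot p y - KN.iot p x = -(KN.iot p x - KN.iot p y) by ring]
    exact KN.sq_neg_iff h7 (sub_ne_zero.mpr hxy')
  unfold KN.tau
  by_cases hc : IsSquare (KN.iot p x - KN.iot p y)
  · rw [if_neg (by rw [hiff]; exact not_not_intro hc), if_pos hc, if_pos hc, zero_add]
  · rw [if_pos (hiff.mpr hc), if_neg hc, if_neg hc, add_zero]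

lemma KN.notMem3 {w x y z : Fin (p + 2)} (hx : w ≠ x) (hy : w ≠ y) (hz : w ≠ z) :
    w ∉ ({x, y, z} : Finset (Fin (p + 2))) := by
  simp only [Finset.mem_insert, Finset.mem_singleton]
  rintro (h | h | h)
  exacts [hx h, hy h, hz h]

lemma KN.erase3 {x y w : Fin (p + 2)} (hx : x ≠ w) (hy : y ≠ w) :
    ({x, y, w} : Finset (Fin (p + 2))).erase w = {x, y} := by
  rw [Finset.erase_insert_of_ne hx, Finset.erase_insert_of_ne hy,
    Finset.erase_singleton]
  rfl

lemma KN.erase2of3 {x y w : Fin (p + 2)} (hx : x ≠ w) (hy : y ≠ w) :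
    (({x, y, w} : Finset (Fin (p + 2))).erase w).erase w = {x, y} := by
  rw [KN.erase3 hx hy, Finset.erase_eq_of_notMem]
  simp only [Finset.mem_insert, Finset.mem_singleton]
  rintro (h | h)
  exacts [hx h.symm, hy h.symm]

lemma KN.colF_fin3 {x y z : Fin (p + 2)} (hx : x.val < p) (hy : y.val < p) (hz : z.val < p)
    (hxy : x ≠ y) (hxz : x ≠ z) (hyz : y ≠ z) :
    KN.colF p {x, y, z} = KN.iot p x + KN.iot p y + KN.iot p z := by
  have h1 : KN.e1 p ∉ ({x, y, z} : Finset (Fin (p + 2))) :=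
    KN.notMem3 (KN.fin_ne_e1 hx).symm (KN.fin_ne_e1 hy).symm (KN.fin_ne_e1 hz).symm
  have h2 : KN.e2 p ∉ ({x, y, z} : Finset (Fin (p + 2))) :=
    KN.notMem3 (KN.fin_ne_e2 hx).symm (KN.fin_ne_e2 hy).symm (KN.fin_ne_e2 hz).symm
  have hfp : KN.fpart p ({x, y, z} : Finset (Fin (p + 2))) = {x, y, z} := by
    unfold KN.fpart
    rw [Finset.erase_eq_of_notMem h1, Finset.erase_eq_of_notMem h2]
  have hxmem : x ∉ ({y, z} : Finset (Fin (p + 2))) := by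
    simp only [Finset.mem_insert, Finset.mem_singleton]
    rintro (h | h)
    exacts [hxy h, hxz h]
  unfold KN.colF
  rw [if_neg h1, if_neg h2, hfp, Finset.sum_insert hxmem, Finset.sum_pair hyz, add_assoc]

lemma KN.fpart_e1 {x y : Fin (p + 2)} (hx : x.val < p) (hy : y.val < p) :
    KN.fpart p ({x, y, KN.e1 p} : Finset (Fin (p + 2))) = {x, y} := by
  unfold KN.fpart
  rw [KN.erase3 (KN.fin_ne_e1 hx) (KN.fin_ne_e1 hy), Finset.erase_eq_of_notMem]
  simp only [Finset.mem_insert, Finset.mem_singleton]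
  rintro (h | h)
  exacts [KN.fin_ne_e2 hx h.symm, KN.fin_ne_e2 hy h.symm]

lemma KN.colF_e1 [Fact p.Prime] (h7 : p % 8 = 7) {x y : Fin (p + 2)}
    (hx : x.val < p) (hy : y.val < p) (hxy : x ≠ y) :
    KN.colF p {x, y, KN.e1 p} = KN.iot p x + KN.iot p y + KN.sig (KN.iot p x) (KN.iot p y) := by
  have h1 : KN.e1 p ∈ ({x, y, KN.e1 p} : Finset (Fin (p + 2))) := by
    simp [Finset.mem_insert]
  have h2 : KN.e2 p ∉ ({x, y, KN.e1 p} : Finset (Fin (p + 2))) :=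
    KN.notMem3 (KN.fin_ne_e2 hx).symm (KN.fin_ne_e2 hy).symm (Ne.symm KN.e1_ne_e2)
  unfold KN.colF
  rw [if_pos h1, if_neg h2, KN.fpart_e1 hx hy, Finset.sum_pair hxy, KN.qsum_pair h7 hx hy hxy]

lemma KN.fpart_e2 {x y : Fin (p + 2)} (hx : x.val < p) (hy : y.val < p) :
    KN.fpart p ({x, y, KN.e2 p} : Finset (Fin (p + 2))) = {x, y} := by
  unfold KN.fpart
  have h1 : KN.e1 p ∉ ({x, y, KN.e2 p} : Finset (Fin (p + 2))) :=
    KN.notMem3 (KN.fin_ne_e1 hx).symm (KN.fin_ne_e1 hy).symm KN.e1_ne_e2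
  rw [Finset.erase_eq_of_notMem h1, KN.erase3 (KN.fin_ne_e2 hx) (KN.fin_ne_e2 hy)]

lemma KN.colF_e2 [Fact p.Prime] (h7 : p % 8 = 7) {x y : Fin (p + 2)}
    (hx : x.val < p) (hy : y.val < p) (hxy : x ≠ y) :
    KN.colF p {x, y, KN.e2 p} = KN.iot p x + KN.iot p y + KN.tau (KN.iot p x) (KN.iot p y) := by
  have h2 : KN.e2 p ∈ ({x, y, KN.e2 p} : Finset (Fin (p + 2))) := by
    simp [Finset.mem_insert]
  have h1 : KN.e1 p ∉ ({x, y, KN.e2 p} : Finset (Fin (p + 2))) :=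
    KN.notMem3 (KN.fin_ne_e1 hx).symm (KN.fin_ne_e1 hy).symm KN.e1_ne_e2
  unfold KN.colF
  rw [if_neg h1, if_pos h2, KN.fpart_e2 hx hy, Finset.sum_pair hxy, KN.qsum'_pair h7 hx hy hxy]

lemma KN.colF_e12 {x : Fin (p + 2)} (hx : x.val < p) :
    KN.colF p {x, KN.e1 p, KN.e2 p} = 3 * KN.iot p x := by
  have h1 : KN.e1 p ∈ ({x, KN.e1 p, KN.e2 p} : Finset (Fin (p + 2))) := by
    simp [Finset.mem_insert]
  have h2 : KN.e2 p ∈ ({x, KN.e1 p, KN.e2 p} : Finset (Fin (p + 2))) := by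
    simp [Finset.mem_insert]
  have hfp : KN.fpart p ({x, KN.e1 p, KN.e2 p} : Finset (Fin (p + 2))) = {x} := by
    unfold KN.fpart
    rw [Finset.erase_insert_of_ne (KN.fin_ne_e1 hx), Finset.erase_insert (by
      simp only [Finset.mem_singleton]; exact KN.e1_ne_e2)]
    rw [Finset.erase_insert_of_ne (KN.fin_ne_e2 hx), Finset.erase_singleton]
    rfl
  unfold KN.colF
  rw [if_pos h1, if_pos h2, hfp, Finset.sum_singleton]

section Cases
variable [Fact p.Prime]

lemma KN.case1 (h7 : p % 8 = 7) {u v a b : Fin (p + 2)} (hu : u.val < p) (hv : v.val < p) (ha : a.val < p)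
    (hb : b.val < p) (huv : u ≠ v) (hau : a ≠ u) (hav : a ≠ v) (hbu : b ≠ u) (hbv : b ≠ v)
    (hab : a ≠ b) : KN.colF p {a, u, v} ≠ KN.colF p {b, u, v} := by
  rw [KN.colF_fin3 ha hu hv hau hav huv, KN.colF_fin3 hb hu hv hbu hbv huv]
  intro h
  exact KN.iot_inj ha hb hab (by linear_combination h)

lemma KN.case2 (h7 : p % 8 = 7) {u v b : Fin (p + 2)} (hu : u.val < p) (hv : v.val < p) (hb : b.val < p)
    (huv : u ≠ v) (hbu : b ≠ u) (hbv : b ≠ v) :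
    KN.colF p {u, v, KN.e1 p} ≠ KN.colF p {b, u, v} := by
  rw [KN.colF_e1 h7 hu hv huv, KN.colF_fin3 hb hu hv hbu hbv huv]
  intro h
  have hs : KN.sig (KN.iot p u) (KN.iot p v) = KN.iot p b := by linear_combination h
  rcases KN.sig_mem (KN.iot p u) (KN.iot p v) with hm | hm <;> rw [hm] at hs
  · exact KN.iot_inj hu hb (Ne.symm hbu) hs
  · exact KN.iot_inj hv hb (Ne.symm hbv) hs

lemma KN.case3 (h7 : p % 8 = 7) {u v b : Fin (p + 2)} (hu : u.val < p) (hv : v.val < p) (hb : b.val < p)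
    (huv : u ≠ v) (hbu : b ≠ u) (hbv : b ≠ v) :
    KN.colF p {u, v, KN.e2 p} ≠ KN.colF p {b, u, v} := by
  rw [KN.colF_e2 h7 hu hv huv, KN.colF_fin3 hb hu hv hbu hbv huv]
  intro h
  have hs : KN.tau (KN.iot p u) (KN.iot p v) = KN.iot p b := by linear_combination h
  rcases KN.tau_mem (KN.iot p u) (KN.iot p v) with hm | hm <;> rw [hm] at hs
  · exact KN.iot_inj hu hb (Ne.symm hbu) hs
  · exact KN.iot_inj hv hb (Ne.symm hbv) hs

lemma KN.case4 (h7 : p % 8 = 7) {u v : Fin (p + 2)} (hu : u.val < p) (hv : v.val < p) (huv : u ≠ v) :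
    KN.colF p {u, v, KN.e1 p} ≠ KN.colF p {u, v, KN.e2 p} := by
  rw [KN.colF_e1 h7 hu hv huv, KN.colF_e2 h7 hu hv huv]
  intro h
  exact KN.sig_ne_tau (KN.iot_inj hu hv huv) (by linear_combination h)

lemma KN.case5 (h7 : p % 8 = 7) {u a b : Fin (p + 2)} (hu : u.val < p) (ha : a.val < p) (hb : b.val < p)
    (hau : a ≠ u) (hbu : b ≠ u) (hab : a ≠ b) :
    KN.colF p {a, u, KN.e1 p} ≠ KN.colF p {b, u, KN.e1 p} := by
  rw [KN.colF_e1 h7 ha hu hau, KN.colF_e1 h7 hb hu hbu]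
  intro h
  rw [KN.sig_comm h7 (KN.iot_inj ha hu hau), KN.sig_comm h7 (KN.iot_inj hb hu hbu)] at h
  exact KN.sig_inj h7 (KN.iot_inj ha hu hau) (KN.iot_inj hb hu hbu) (KN.iot_inj ha hb hab)
    (by linear_combination h)

lemma KN.case6 (h7 : p % 8 = 7) {u b : Fin (p + 2)} (hu : u.val < p) (hb : b.val < p) (hbu : b ≠ u) :
    KN.colF p {u, KN.e1 p, KN.e2 p} ≠ KN.colF p {b, u, KN.e1 p} := by
  rw [KN.colF_e12 hu, KN.colF_e1 h7 hb hu hbu]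
  intro h
  rw [KN.sig_comm h7 (KN.iot_inj hb hu hbu)] at h
  exact KN.add_sig_ne h7 (KN.iot_inj hb hu hbu) (by linear_combination -h)

lemma KN.case7 (h7 : p % 8 = 7) {u a b : Fin (p + 2)} (hu : u.val < p) (ha : a.val < p) (hb : b.val < p)
    (hau : a ≠ u) (hbu : b ≠ u) (hab : a ≠ b) :
    KN.colF p {a, u, KN.e2 p} ≠ KN.colF p {b, u, KN.e2 p} := by
  rw [KN.colF_e2 h7 ha hu hau, KN.colF_e2 h7 hb hu hbu]
  intro h
  rw [KN.tau_comm h7 (KN.iot_inj ha hu hau), KN.tau_comm h7 (KN.iot_inj hb hu hbu)] at h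
  exact KN.tau_inj h7 (KN.iot_inj ha hu hau) (KN.iot_inj hb hu hbu) (KN.iot_inj ha hb hab)
    (by linear_combination h)

lemma KN.case8 (h7 : p % 8 = 7) {u b : Fin (p + 2)} (hu : u.val < p) (hb : b.val < p) (hbu : b ≠ u) :
    KN.colF p {u, KN.e1 p, KN.e2 p} ≠ KN.colF p {b, u, KN.e2 p} := by
  rw [KN.colF_e12 hu, KN.colF_e2 h7 hb hu hbu]
  intro h
  rw [KN.tau_comm h7 (KN.iot_inj hb hu hbu)] at h
  exact KN.add_tau_ne h7 (KN.iot_inj hb hu hbu) (by linear_combination -h)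

lemma KN.case9 (h7 : p % 8 = 7) {a b : Fin (p + 2)} (ha : a.val < p) (hb : b.val < p) (hab : a ≠ b) :
    KN.colF p {a, KN.e1 p, KN.e2 p} ≠ KN.colF p {b, KN.e1 p, KN.e2 p} := by
  rw [KN.colF_e12 ha, KN.colF_e12 hb]
  intro h
  exact KN.iot_inj ha hb hab (by
    have h3 : (3 : ZMod p) ≠ 0 := KN.three_ne_zero' h7
    exact mul_left_cancel₀ h3 h)

end Cases

lemma KN.tricho (w : Fin (p + 2)) : w = KN.e1 p ∨ w = KN.e2 p ∨ w.val < p := by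
  have hw := w.isLt
  by_cases h : w.val < p
  · exact Or.inr (Or.inr h)
  · by_cases h1 : w.val = p
    · exact Or.inl (Fin.ext (by simp [KN.e1, h1]))
    · exact Or.inr (Or.inl (Fin.ext (by simp [KN.e2]; omega)))

lemma KN.master [Fact p.Prime] (h7 : p % 8 = 7) {u v a b : Fin (p + 2)}
    (huv : u ≠ v) (hau : a ≠ u) (hav : a ≠ v) (hbu : b ≠ u) (hbv : b ≠ v) (hab : a ≠ b) :
    KN.colF p {a, u, v} ≠ KN.colF p {b, u, v} := by
  rcases KN.tricho u with hu | hu | hu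
  · -- u = e1
    subst hu
    rcases KN.tricho v with hv | hv | hv
    · exact (huv hv.symm).elim
    · -- v = e2 : pair {e1, e2}
      subst hv
      rcases KN.tricho a with ha | ha | ha
      · exact (hau ha).elim
      · exact (hav ha).elim
      rcases KN.tricho b with hb | hb | hb
      · exact (hbu hb).elim
      · exact (hbv hb).elim
      exact KN.case9 h7 ha hb hab
    · -- v finite : pair {e1, v}
      rw [Finset.pair_comm (KN.e1 p) v]
      rcases KN.tricho a with ha | ha | ha
      · exact (hau ha).elim
      · -- a = e2
        subst ha
        rcases KN.tricho b with hb | hb | hb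
        · exact (hbu hb).elim
        · exact (hab hb.symm).elim
        · rw [Finset.insert_comm (KN.e2 p) v, Finset.pair_comm (KN.e2 p) (KN.e1 p)]
          exact KN.case6 h7 hv hb hbv
      · rcases KN.tricho b with hb | hb | hb
        · exact (hbu hb).elim
        · subst hb
          rw [Finset.insert_comm (KN.e2 p) v, Finset.pair_comm (KN.e2 p) (KN.e1 p)]
          exact (KN.case6 h7 hv ha hav).symm
        · exact KN.case5 h7 hv ha hb hav hbv hab
  · -- u = e2
    subst hu
    rcases KN.tricho v with hv | hv | hv
    · -- v = e1 : pair {e2, e1}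
      subst hv
      rw [Finset.pair_comm (KN.e2 p) (KN.e1 p)]
      rcases KN.tricho a with ha | ha | ha
      · exact (hav ha).elim
      · exact (hau ha).elim
      rcases KN.tricho b with hb | hb | hb
      · exact (hbv hb).elim
      · exact (hbu hb).elim
      exact KN.case9 h7 ha hb hab
    · exact (huv hv.symm).elim
    · -- v finite : pair {e2, v}
      rw [Finset.pair_comm (KN.e2 p) v]
      rcases KN.tricho a with ha | ha | ha
      · -- a = e1
        subst ha
        rcases KN.tricho b with hb | hb | hb
        · exact (hab hb.symm).elim
        · exact (hbu hb).elim
        · rw [Finset.insert_comm (KN.e1 p) v]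
          exact KN.case8 h7 hv hb hbv
      · exact (hau ha).elim
      · rcases KN.tricho b with hb | hb | hb
        · subst hb
          rw [Finset.insert_comm (KN.e1 p) v]
          exact (KN.case8 h7 hv ha hav).symm
        · exact (hbu hb).elim
        · exact KN.case7 h7 hv ha hb hav hbv hab
  · -- u finite
    rcases KN.tricho v with hv | hv | hv
    · -- v = e1 : pair {u, e1}
      subst hv
      rcases KN.tricho a with ha | ha | ha
      · exact (hav ha).elim
      · -- a = e2
        subst ha
        rcases KN.tricho b with hb | hb | hb
        · exact (hbv hb).elim
        · exact (hab hb.symm).elim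
        · rw [Finset.insert_comm (KN.e2 p) u, Finset.pair_comm (KN.e2 p) (KN.e1 p)]
          exact KN.case6 h7 hu hb hbu
      · rcases KN.tricho b with hb | hb | hb
        · exact (hbv hb).elim
        · subst hb
          rw [Finset.insert_comm (KN.e2 p) u, Finset.pair_comm (KN.e2 p) (KN.e1 p)]
          exact (KN.case6 h7 hu ha hau).symm
        · exact KN.case5 h7 hu ha hb hau hbu hab
    · -- v = e2 : pair {u, e2}
      subst hv
      rcases KN.tricho a with ha | ha | ha
      · -- a = e1
        subst ha
        rcases KN.tricho b with hb | hb | hb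
        · exact (hab hb.symm).elim
        · exact (hbv hb).elim
        · rw [Finset.insert_comm (KN.e1 p) u]
          exact KN.case8 h7 hu hb hbu
      · exact (hav ha).elim
      · rcases KN.tricho b with hb | hb | hb
        · subst hb
          rw [Finset.insert_comm (KN.e1 p) u]
          exact (KN.case8 h7 hu ha hau).symm
        · exact (hbv hb).elim
        · exact KN.case7 h7 hu ha hb hau hbu hab
    · -- u, v finite
      rcases KN.tricho a with ha | ha | ha
      · -- a = e1
        subst ha
        rw [Finset.insert_comm (KN.e1 p) u, Finset.pair_comm (KN.e1 p) v]
        rcases KN.tricho b with hb | hb | hb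
        · exact (hab hb.symm).elim
        · subst hb
          rw [Finset.insert_comm (KN.e2 p) u, Finset.pair_comm (KN.e2 p) v]
          exact KN.case4 h7 hu hv huv
        · exact KN.case2 h7 hu hv hb huv hbu hbv
      · -- a = e2
        subst ha
        rw [Finset.insert_comm (KN.e2 p) u, Finset.pair_comm (KN.e2 p) v]
        rcases KN.tricho b with hb | hb | hb
        · subst hb
          rw [Finset.insert_comm (KN.e1 p) u, Finset.pair_comm (KN.e1 p) v]
          exact (KN.case4 h7 hu hv huv).symm
        · exact (hab hb.symm).elim
        · exact KN.case3 h7 hu hv hb huv hbu hbv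
      · rcases KN.tricho b with hb | hb | hb
        · subst hb
          rw [Finset.insert_comm (KN.e1 p) u, Finset.pair_comm (KN.e1 p) v]
          exact (KN.case2 h7 hu hv ha huv hau hav).symm
        · subst hb
          rw [Finset.insert_comm (KN.e2 p) u, Finset.pair_comm (KN.e2 p) v]
          exact (KN.case3 h7 hu hv ha huv hau hav).symm
        · exact KN.case1 h7 hu hv ha hb huv hau hav hbu hbv hab

lemma KN.colF_proper [Fact p.Prime] (h7 : p % 8 = 7) {s s' : Finset (Fin (p + 2))}
    (hs : s.card = 3) (hs' : s'.card = 3) (hne : s ≠ s') (hint : (s ∩ s').card = 2) :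
    KN.colF p s ≠ KN.colF p s' := by
  obtain ⟨u, v, huv, ht⟩ := Finset.card_eq_two.mp hint
  have hts : s ∩ s' ⊆ s := Finset.inter_subset_left
  have hts' : s ∩ s' ⊆ s' := Finset.inter_subset_right
  have h1 : (s \ (s ∩ s')).card = 1 := by rw [Finset.card_sdiff_of_subset hts, hs, hint]
  have h1' : (s' \ (s ∩ s')).card = 1 := by rw [Finset.card_sdiff_of_subset hts', hs', hint]
  obtain ⟨a, ha⟩ := Finset.card_eq_one.mp h1
  obtain ⟨b, hb⟩ := Finset.card_eq_one.mp h1'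
  have hsa : s = insert a (s ∩ s') := by
    have h2 := Finset.sdiff_union_of_subset hts
    rw [ha] at h2
    rw [Finset.insert_eq]
    exact h2.symm
  have hsb : s' = insert b (s ∩ s') := by
    have h2 := Finset.sdiff_union_of_subset hts'
    rw [hb] at h2
    rw [Finset.insert_eq]
    exact h2.symm
  have hat : a ∉ s ∩ s' := by
    have : a ∈ s \ (s ∩ s') := ha ▸ Finset.mem_singleton_self a
    exact (Finset.mem_sdiff.mp this).2
  have hbt : b ∉ s ∩ s' := by
    have : b ∈ s' \ (s ∩ s') := hb ▸ Finset.mem_singleton_self b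
    exact (Finset.mem_sdiff.mp this).2
  have hab : a ≠ b := by
    intro h
    subst h
    exact hne (hsa.trans hsb.symm)
  rw [ht] at hsa hsb hat hbt
  have hau : a ≠ u := fun h => hat (by rw [h]; exact Finset.mem_insert_self u {v})
  have hav : a ≠ v := fun h => hat (by rw [h]; exact Finset.mem_insert_of_mem (Finset.mem_singleton_self v))
  have hbu : b ≠ u := fun h => hbt (by rw [h]; exact Finset.mem_insert_self u {v})
  have hbv : b ≠ v := fun h => hbt (by rw [h]; exact Finset.mem_insert_of_mem (Finset.mem_singleton_self v))
  rw [hsa, hsb]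
  exact KN.master h7 huv hau hav hbu hbv hab

def knGraph (n : ℕ) : SimpleGraph {s : Finset (Fin n) // s.card = 3} :=
  SimpleGraph.fromRel (fun x y => (x.val ∩ y.val).card = 2)

lemma KN.lower {n m : ℕ} (hn : 2 ≤ n) (hc : (knGraph n).Colorable m) : n - 2 ≤ m := by
  classical
  obtain ⟨C⟩ := hc
  have key : ∀ i : Fin m,
      3 * (Finset.univ.filter (fun v : {s : Finset (Fin n) // s.card = 3} => C v = i)).card
        ≤ n.choose 2 := by
    intro i
    set cls := Finset.univ.filter (fun v : {s : Finset (Fin n) // s.card = 3} => C v = i) with hcls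
    have hdisj : ∀ x ∈ cls, ∀ y ∈ cls, x ≠ y →
        Disjoint (x.val.powersetCard 2) (y.val.powersetCard 2) := by
      intro x hx y hy hxy
      rw [Finset.disjoint_left]
      intro t htx hty
      rw [Finset.mem_powersetCard] at htx hty
      have hsub : t ⊆ x.val ∩ y.val := Finset.subset_inter htx.1 hty.1
      have h2 : 2 ≤ (x.val ∩ y.val).card := by
        have := Finset.card_le_card hsub
        omega
      have h3 : (x.val ∩ y.val).card ≤ 3 := by
        have := Finset.card_le_card (Finset.inter_subset_left : x.val ∩ y.val ⊆ x.val)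
        omega
      have hor : (x.val ∩ y.val).card = 2 ∨ (x.val ∩ y.val).card = 3 := by omega
      rcases hor with hc2 | hc3
      · have hadj : (knGraph n).Adj x y := by
          have : (SimpleGraph.fromRel
              (fun x y : {s : Finset (Fin n) // s.card = 3} => (x.val ∩ y.val).card = 2)).Adj x y :=
            (SimpleGraph.fromRel_adj _ _ _).mpr ⟨hxy, Or.inl hc2⟩
          exact this
        have hval := C.valid hadj
        rw [hcls, Finset.mem_filter] at hx hy
        exact hval (hx.2.trans hy.2.symm)
      · have heq : x.val ∩ y.val = x.val :=
          Finset.eq_of_subset_of_card_le Finset.inter_subset_left (by rw [x.2, hc3])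
        have hsub2 : x.val ⊆ y.val := by rw [← heq]; exact Finset.inter_subset_right
        have : x.val = y.val := Finset.eq_of_subset_of_card_le hsub2 (by rw [x.2, y.2])
        exact hxy (Subtype.ext this)
    have hcard : (cls.biUnion (fun v => v.val.powersetCard 2)).card = 3 * cls.card := by
      rw [Finset.card_biUnion hdisj]
      have heach : ∀ v ∈ cls, (v.val.powersetCard 2).card = 3 := by
        intro v hv
        rw [Finset.card_powersetCard, v.2]
        rfl
      rw [Finset.sum_congr rfl heach, Finset.sum_const, smul_eq_mul, mul_comm]
    have hsub : cls.biUnion (fun v => v.val.powersetCard 2)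
        ⊆ (Finset.univ : Finset (Fin n)).powersetCard 2 := by
      intro t ht
      rw [Finset.mem_biUnion] at ht
      obtain ⟨v, hv, htv⟩ := ht
      rw [Finset.mem_powersetCard] at htv ⊢
      exact ⟨Finset.subset_univ _, htv.2⟩
    have hle := Finset.card_le_card hsub
    rw [hcard, Finset.card_powersetCard, Finset.card_univ, Fintype.card_fin] at hle
    exact hle
  have htot : ∑ i : Fin m,
      (Finset.univ.filter (fun v : {s : Finset (Fin n) // s.card = 3} => C v = i)).card
        = n.choose 3 := by
    rw [← Finset.card_eq_sum_card_fiberwise (fun v _ => Finset.mem_univ (C v)), Finset.card_univ]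
    simp
  have hmul : (n - 2) * n.choose 2 = 3 * n.choose 3 := by
    calc (n - 2) * n.choose 2 = n.choose 2 * (n - 2) := mul_comm _ _
      _ = n.choose 3 * 3 := (Nat.choose_succ_right_eq n 2).symm
      _ = 3 * n.choose 3 := mul_comm _ _
  have hle3 : 3 * n.choose 3 ≤ m * n.choose 2 := by
    rw [← htot, Finset.mul_sum]
    refine le_trans (Finset.sum_le_sum fun i _ => key i) ?_
    rw [Finset.sum_const, Finset.card_univ, Fintype.card_fin, smul_eq_mul]
  have hpos : 0 < n.choose 2 := Nat.choose_pos hn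
  have hfin : (n - 2) * n.choose 2 ≤ m * n.choose 2 := by rw [hmul]; exact hle3
  exact Nat.le_of_mul_le_mul_right hfin hpos

theorem chromatic_number_eq (k p : ℕ) (hk : 0 < k) (hp8 : p = 8 * k - 1)
    (hp : p.Prime) : (knGraph (p + 2)).chromaticNumber = p := by
  haveI : Fact p.Prime := ⟨hp⟩
  haveI : NeZero p := ⟨hp.pos.ne'⟩
  have h7 : p % 8 = 7 := by
    have h2 := hp.two_le
    omega
  have hcol : (knGraph (p + 2)).Colorable p := by
    have C : (knGraph (p + 2)).Coloring (ZMod p) := by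
      refine SimpleGraph.Coloring.mk (fun v => KN.colF p v.val) ?_
      intro x y hadj
      have hadj' : x ≠ y ∧ ((x.val ∩ y.val).card = 2 ∨ (y.val ∩ x.val).card = 2) := by
        have : (SimpleGraph.fromRel
            (fun x y : {s : Finset (Fin (p + 2)) // s.card = 3} =>
              (x.val ∩ y.val).card = 2)).Adj x y := hadj
        rwa [SimpleGraph.fromRel_adj] at this
      obtain ⟨hne, hcd⟩ := hadj'
      have hne' : x.val ≠ y.val := fun h => hne (Subtype.ext h)
      have hc2 : (x.val ∩ y.val).card = 2 := by
        rcases hcd with h | h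
        · exact h
        · rwa [Finset.inter_comm]
      exact KN.colF_proper h7 x.2 y.2 hne' hc2
    have hcc := C.colorable
    rwa [ZMod.card] at hcc
  refine le_antisymm hcol.chromaticNumber_le ?_
  rw [SimpleGraph.chromaticNumber]
  refine le_iInf₂ fun n hn => ?_
  have hlow := KN.lower (by omega : 2 ≤ p + 2) hn
  exact Nat.cast_le.mpr (by omega)
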